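/- arXiv:1112.5772 — 2 statements merged into one kernel-verified Lean document; each statement's English description precedes it below -/
import Mathlib

section
/- Let λ be a regular infinite cardinal and λ < μ < 𝔰_λ. Then (μ,λ) → (μ,λ)^{1,1}_2 holds if and only if cf(μ) ≠ λ. -/
open Cardinal Set

noncomputable section

/-- The canonical type of cardinality `c`: the order type of `c.ord`. -/
abbrev OT (c : Cardinal) : Type _ := c.ord.ToType

/-- `S` splits `B` (as subsets of a set of size `lam`). -/
def Splits (lam : Cardinal) (S B : Set (OT lam)) : Prop :=
  #(↥(S ∩ B)) = lam ∧ #(↥(B \ S)) = lam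

/-- A splitting family on `lam`. -/
def IsSplittingFamily (lam : Cardinal) (F : Set (Set (OT lam))) : Prop :=
  ∀ B : Set (OT lam), #B = lam → ∃ S ∈ F, Splits lam S B

/-- The splitting number `𝔰_lam`. -/
def splittingNumber (lam : Cardinal) : Cardinal :=
  sInf { κ | ∃ F : Set (Set (OT lam)), #F = κ ∧ IsSplittingFamily lam F }

/-- An unreaped family on `lam`. -/
def IsUnreaped (lam : Cardinal) (F : Set (Set (OT lam))) : Prop :=
  (∀ A ∈ F, #A = lam) ∧
  ¬ ∃ S : Set (OT lam), #S = lam ∧ ∀ A ∈ F, Splits lam S A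

/-- The reaping number `𝔯_lam`. -/
def reapingNumber (lam : Cardinal) : Cardinal :=
  sInf { κ | ∃ F : Set (Set (OT lam)), #F = κ ∧ IsUnreaped lam F }

/-- The strong polarized relation `(μ, lam) → (μ, lam)^{1,1}_2`. -/
def StrongPolarized (μ lam : Cardinal) : Prop :=
  ∀ c : OT μ → OT lam → Fin 2,
    ∃ (A : Set (OT μ)) (B : Set (OT lam)) (i : Fin 2),
      #A = μ ∧ #B = lam ∧ ∀ α ∈ A, ∀ β ∈ B, c α β = i

end

section Aux

lemma fin2_eq_one : ∀ x : Fin 2, x ≠ 0 → x = 1 := by decide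

lemma fin2_cases : ∀ x : Fin 2, x = 0 ∨ x = 1 := by decide

variable {lam μ : Cardinal}

/-- A small subset of `OT lam` is bounded, for `lam` regular. -/
lemma OT_bounded (hlam : lam.IsRegular) {S : Set (OT lam)} (h : #S < lam) :
    ∃ j : OT lam, ∀ x ∈ S, x < j := by
  haveI : IsWellOrder (OT lam) (· < ·) := isWellOrder_lt
  have h' : #S < Ordinal.cof (Ordinal.type ((· < ·) : OT lam → OT lam → Prop)) := by
    rwa [Ordinal.type_toType, hlam.cof_eq]
  exact not_isCofinal_iff.1 (fun hS => absurd h' (not_lt.2 (by simpa using Order.cof_le hS)))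

lemma mk_Iic_lt {c : Cardinal} (hc : ℵ₀ ≤ c) (j : OT c) : #(Iic j) < c := by
  have h1 : #(Iic j) ≤ #(Iio j) + 1 := by
    rw [← Set.Iio_insert]
    exact Cardinal.mk_insert_le
  exact h1.trans_lt (Cardinal.add_lt_of_lt hc (Cardinal.mk_Iio_ord_toType j)
    (one_lt_aleph0.trans_le hc))

lemma mk_diff_eq (hc : ℵ₀ ≤ lam) {B C : Set (OT lam)} (hB : #B = lam) (hC : #C < lam) :
    #(B \ C : Set (OT lam)) = lam := by
  refine le_antisymm ((Cardinal.mk_set_le _).trans_eq (Cardinal.mk_ord_toType lam)) ?_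
  by_contra h
  push_neg at h
  have hsub : B ⊆ (B \ C) ∪ C := fun x hx => by
    by_cases hxC : x ∈ C
    · exact Or.inr hxC
    · exact Or.inl ⟨hx, hxC⟩
  have hle := (Cardinal.mk_le_mk_of_subset hsub).trans (Cardinal.mk_union_le _ _)
  rw [hB] at hle
  exact absurd (hle.trans_lt (Cardinal.add_lt_of_lt hc h hC)) (lt_irrefl _)

lemma OT_nonempty (hc : lam ≠ 0) : Nonempty (OT lam) := by
  refine Cardinal.mk_ne_zero_iff.1 ?_
  rw [Cardinal.mk_ord_toType]
  exact hc

/-- The key fiber lemma: if `cf μ ≠ lam`, any `μ`-sized set admits a `μ`-sized subset on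
which `g : OT μ → OT lam` is bounded. -/
lemma exists_big_fiber (hlam : lam.IsRegular) (h1 : lam < μ) (hcof : μ.ord.cof ≠ lam)
    (A' : Set (OT μ)) (hA' : #A' = μ) (g : OT μ → OT lam) :
    ∃ j : OT lam, #({α | α ∈ A' ∧ g α ≤ j} : Set (OT μ)) = μ := by
  have hμ : ℵ₀ ≤ μ := hlam.aleph0_le.trans h1.le
  have : Nonempty (OT lam) := OT_nonempty hlam.pos.ne'
  set F : OT lam → Cardinal := fun j => #({α | α ∈ A' ∧ g α ≤ j} : Set (OT μ)) with hF
  have hFle : ∀ j, F j ≤ μ := fun j =>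
    (Cardinal.mk_set_le _).trans_eq (Cardinal.mk_ord_toType μ)
  have hmono : ∀ ⦃j k : OT lam⦄, j ≤ k → F j ≤ F k := fun j k hjk =>
    Cardinal.mk_le_mk_of_subset (fun α hα => ⟨hα.1, hα.2.trans hjk⟩)
  have hcov : A' = ⋃ j, {α | α ∈ A' ∧ g α ≤ j} := by
    ext α
    simp only [Set.mem_iUnion, Set.mem_setOf_eq]
    exact ⟨fun h => ⟨g α, h, le_rfl⟩, fun ⟨j, h, _⟩ => h⟩
  have hsup : μ ≤ lam * ⨆ j, F j := by
    calc μ = #A' := hA'.symm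
    _ = #(⋃ j, ({α | α ∈ A' ∧ g α ≤ j} : Set (OT μ))) := by rw [← hcov]
    _ ≤ #(OT lam) * ⨆ j, F j := Cardinal.mk_iUnion_le _
    _ = lam * ⨆ j, F j := by rw [Cardinal.mk_ord_toType]
  have hsupF : ⨆ j, F j = μ := by
    refine le_antisymm (ciSup_le hFle) ?_
    by_contra h
    push_neg at h
    exact absurd (hsup.trans_lt (Cardinal.mul_lt_of_lt hμ h1 h)) (lt_irrefl _)
  by_cases hex : ∃ j, F j = μ
  · exact hex
  push_neg at hex
  have hall : ∀ j, F j < μ := fun j => (hFle j).lt_of_ne (hex j)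
  exfalso
  rcases hcof.lt_or_gt with hc | hc
  · -- cf μ < lam
    obtain ⟨ι, f, hlsub, hι⟩ := Ordinal.exists_lsub_cof μ.ord
    have hι' : #ι < lam := by rw [hι]; exact hc
    have hchoice : ∀ x : ι, ∃ j, (f x).card < F j := by
      intro x
      have h1x : (f x).card < μ := Cardinal.lt_ord.1 (hlsub ▸ Ordinal.lt_lsub f x)
      rw [← hsupF] at h1x
      exact exists_lt_of_lt_ciSup h1x
    choose jx hjx using hchoice
    obtain ⟨j, hj⟩ := OT_bounded hlam
      (show #(Set.range jx) < lam from Cardinal.mk_range_le.trans_lt hι')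
    have hFj : ∀ ν < μ, ν < F j := by
      intro ν hν
      have hν' : ν.ord < Ordinal.lsub f := by rw [hlsub]; exact Cardinal.ord_lt_ord.2 hν
      obtain ⟨x, hx⟩ := Ordinal.lt_lsub_iff.1 hν'
      have hν'' : ν ≤ (f x).card := by
        have := Ordinal.card_le_card hx
        rwa [Cardinal.card_ord] at this
      exact hν''.trans_lt ((hjx x).trans_le (hmono (hj _ (Set.mem_range_self x)).le))
    exact absurd (hFj (F j) (hall j)) (lt_irrefl _)
  · -- lam < cf μ
    have hlt : ⨆ j, F j < μ :=
      Ordinal.iSup_lt (by rw [Cardinal.mk_ord_toType]; exact hc) hall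
    rw [hsupF] at hlt
    exact absurd hlt (lt_irrefl _)

lemma easy_dir (hlam : lam.IsRegular) (h1 : lam < μ) (hcof : μ.ord.cof = lam) :
    ¬ StrongPolarized μ lam := by
  haveI : IsWellOrder (OT μ) (· < ·) := isWellOrder_lt
  haveI : IsWellOrder (OT lam) (· < ·) := isWellOrder_lt
  have hμ : ℵ₀ ≤ μ := hlam.aleph0_le.trans h1.le
  obtain ⟨S, hSunb, hStype⟩ := Ordinal.exists_ord_cof_eq (OT μ)
  rw [Ordinal.cof_toType, hcof] at hStype
  haveI : IsWellOrder (Subtype S) (Subrel ((· < ·) : OT μ → OT μ → Prop) S) :=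
    Subrel.instIsWellOrderSubtype (· < ·) S
  have htype : Ordinal.type ((· < ·) : OT lam → OT lam → Prop)
      = Ordinal.type (Subrel ((· < ·) : OT μ → OT μ → Prop) S) := by
    rw [Ordinal.type_toType]; exact hStype.symm
  obtain ⟨e⟩ := Ordinal.type_eq.1 htype
  set f : OT lam → OT μ := fun β => (e β).1 with hf
  have hsm : StrictMono f := by
    intro β γ h
    have := e.map_rel_iff.2 h
    exact this
  have hsurj : ∀ s ∈ S, ∃ γ, f γ = s := by
    intro s hs
    exact ⟨e.symm ⟨s, hs⟩, by simp [hf]⟩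
  set c : OT μ → OT lam → Fin 2 := fun α β => if α < f β then 0 else 1 with hc
  intro hSP
  obtain ⟨A, B, i, hA, hB, hmc⟩ := hSP c
  have hBne : B.Nonempty := by
    refine Set.nonempty_coe_sort.1 (Cardinal.mk_ne_zero_iff.1 ?_)
    rw [hB]; exact hlam.pos.ne'
  have hAne : A.Nonempty := by
    refine Set.nonempty_coe_sort.1 (Cardinal.mk_ne_zero_iff.1 ?_)
    rw [hA]; exact (aleph0_pos.trans_le hμ).ne'
  obtain rfl | rfl := fin2_cases i
  · -- color 0 : A ⊆ Iio (f β₀)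
    obtain ⟨β₀, hβ₀⟩ := hBne
    have hsub : A ⊆ Iio (f β₀) := by
      intro α hα
      have hcc := hmc α hα β₀ hβ₀
      by_contra hnot
      simp only [Set.mem_Iio] at hnot
      rw [hc] at hcc
      simp only [if_neg hnot] at hcc
      exact absurd hcc (by decide)
    have hlt := (Cardinal.mk_le_mk_of_subset hsub).trans_lt (Cardinal.mk_Iio_ord_toType _)
    rw [hA] at hlt
    exact lt_irrefl _ hlt
  · -- color 1 : everything below α₀
    obtain ⟨α₀, hα₀⟩ := hAne
    have hball : ∀ y : OT μ, y ≤ α₀ := by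
      intro y
      obtain ⟨s, hsS, hsy⟩ := hSunb y
      obtain ⟨γ, hγ⟩ := hsurj s hsS
      have hBβ : ∃ β ∈ B, γ ≤ β := by
        by_contra hcon
        push_neg at hcon
        have hBsub : B ⊆ Iio γ := fun β hβ => hcon β hβ
        have := (Cardinal.mk_le_mk_of_subset hBsub).trans_lt (Cardinal.mk_Iio_ord_toType γ)
        rw [hB] at this
        exact lt_irrefl _ this
      obtain ⟨β, hβB, hγβ⟩ := hBβ
      have h2 : f β ≤ α₀ := by
        have hcc := hmc α₀ hα₀ β hβB
        by_contra hnot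
        push_neg at hnot
        rw [hc] at hcc
        simp only [if_pos hnot] at hcc
        exact absurd hcc (by decide)
      calc y ≤ s := hsy
      _ = f γ := hγ.symm
      _ ≤ f β := hsm.monotone hγβ
      _ ≤ α₀ := h2
    have husub : (univ : Set (OT μ)) ⊆ Iic α₀ := fun y _ => hball y
    have h := (Cardinal.mk_le_mk_of_subset husub).trans_lt (mk_Iic_lt hμ α₀)
    rw [Cardinal.mk_univ, Cardinal.mk_ord_toType] at h
    exact lt_irrefl _ h

lemma hard_dir (hlam : lam.IsRegular) (h1 : lam < μ) (h2 : μ < splittingNumber lam)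
    (hcof : μ.ord.cof ≠ lam) : StrongPolarized μ lam := by
  have hμ : ℵ₀ ≤ μ := hlam.aleph0_le.trans h1.le
  intro c
  set Sf : OT μ → Set (OT lam) := fun α => {β | c α β = 0} with hSf
  have hnotsp : ¬ IsSplittingFamily lam (Set.range Sf) := by
    intro hsp
    have hle : splittingNumber lam ≤ #(Set.range Sf) := csInf_le' ⟨Set.range Sf, rfl, hsp⟩
    have h3 : #(Set.range Sf) ≤ μ := Cardinal.mk_range_le.trans_eq (Cardinal.mk_ord_toType μ)
    exact absurd ((hle.trans h3).trans_lt h2) (lt_irrefl _)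
  rw [IsSplittingFamily] at hnotsp
  push_neg at hnotsp
  obtain ⟨B, hB, hns⟩ := hnotsp
  have hkey : ∀ α : OT μ, ∃ (i : Fin 2) (bad : Set (OT lam)), #bad < lam ∧
      ∀ β ∈ B, β ∉ bad → c α β = i := by
    intro α
    have hnsα : ¬ Splits lam (Sf α) B := hns (Sf α) (Set.mem_range_self α)
    rw [Splits] at hnsα
    have hle1 : #(Sf α ∩ B : Set (OT lam)) ≤ lam :=
      (Cardinal.mk_set_le _).trans_eq (Cardinal.mk_ord_toType lam)
    have hle2 : #(B \ Sf α : Set (OT lam)) ≤ lam :=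
      (Cardinal.mk_set_le _).trans_eq (Cardinal.mk_ord_toType lam)
    by_cases hc0 : #(Sf α ∩ B : Set (OT lam)) = lam
    · refine ⟨0, B \ Sf α, hle2.lt_of_ne (fun h => hnsα ⟨hc0, h⟩), ?_⟩
      intro β hβ hnb
      by_contra hx
      exact hnb ⟨hβ, hx⟩
    · have hone : #(B \ Sf α : Set (OT lam)) = lam := by
        by_contra hcon
        have hu : B ⊆ (Sf α ∩ B) ∪ (B \ Sf α) := fun β hβ => by
          by_cases hs : β ∈ Sf α
          · exact Or.inl ⟨hs, hβ⟩
          · exact Or.inr ⟨hβ, hs⟩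
        have hle := (Cardinal.mk_le_mk_of_subset hu).trans (Cardinal.mk_union_le _ _)
        rw [hB] at hle
        exact absurd (hle.trans_lt (Cardinal.add_lt_of_lt hlam.aleph0_le
          (hle1.lt_of_ne hc0) (hle2.lt_of_ne hcon))) (lt_irrefl _)
      refine ⟨1, Sf α ∩ B, hle1.lt_of_ne hc0, ?_⟩
      intro β hβ hnb
      have hx : β ∉ Sf α := fun hs => hnb ⟨hs, hβ⟩
      exact fin2_eq_one _ hx
  choose col bad hbadlt hbadc using hkey
  have hpig : ∃ i : Fin 2, #({α | col α = i} : Set (OT μ)) = μ := by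
    by_contra hcon
    push_neg at hcon
    have hlt : ∀ i : Fin 2, #({α | col α = i} : Set (OT μ)) < μ := fun i =>
      ((Cardinal.mk_set_le _).trans_eq (Cardinal.mk_ord_toType μ)).lt_of_ne (hcon i)
    have hu : (univ : Set (OT μ)) ⊆ {α | col α = 0} ∪ {α | col α = 1} := fun α _ => by
      rcases fin2_cases (col α) with h | h
      · exact Or.inl h
      · exact Or.inr h
    have hle := (Cardinal.mk_le_mk_of_subset hu).trans (Cardinal.mk_union_le _ _)
    rw [Cardinal.mk_univ, Cardinal.mk_ord_toType] at hle
    exact absurd (hle.trans_lt (Cardinal.add_lt_of_lt hμ (hlt 0) (hlt 1))) (lt_irrefl _)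
  obtain ⟨i, hA'⟩ := hpig
  choose g hg using fun α : OT μ => OT_bounded hlam (hbadlt α)
  obtain ⟨j, hj⟩ := exists_big_fiber hlam h1 hcof {α | col α = i} hA' g
  refine ⟨{α | α ∈ ({α | col α = i} : Set (OT μ)) ∧ g α ≤ j}, B \ Iic j, i, hj,
    mk_diff_eq hlam.aleph0_le hB (mk_Iic_lt hlam.aleph0_le j), ?_⟩
  rintro α ⟨hαi, hαj⟩ β ⟨hβB, hβj⟩
  have hβbad : β ∉ bad α := fun hbad => hβj (((hg α β hbad).trans_le hαj).le)
  rw [hbadc α β hβB hβbad]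
  exact hαi

end Aux

/-- for regular `lam` and `lam < μ < 𝔰_lam`, the strong polarized
relation `(μ,lam) → (μ,lam)^{1,1}_2` holds iff `cf μ ≠ lam`. -/
theorem stmt2 (lam μ : Cardinal) (hlam : lam.IsRegular)
    (h1 : lam < μ) (h2 : μ < splittingNumber lam) :
    StrongPolarized μ lam ↔ μ.ord.cof ≠ lam := by
  constructor
  · intro hSP hcof
    exact easy_dir hlam h1 hcof hSP
  · intro hcof
    exact hard_dir hlam h1 h2 hcof
end

section
/- Let λ be a regular infinite cardinal and μ a cardinal with 𝔯_λ < μ ≤ 2^λ and cf(μ) > 𝔯_λ. Then the strong polarized relation (μ,λ) → (μ,λ)^{1,1}_2 holds: for every c : μ × λ → 2 there exist H ⊆ μ with |H| = μ and a set C ⊆ λ with |C| = λ such that c is constant on H × C. -/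
open Cardinal Set

noncomputable section Aux

universe u

open Cardinal Set

variable {lam : Cardinal.{u}}

lemma mk_OT (c : Cardinal.{u}) : #(OT c) = c := by
  rw [Cardinal.mk_toType, Cardinal.card_ord]

lemma OT.nonempty (h : lam ≠ 0) : Nonempty (OT lam) := by
  rw [Ordinal.toType_nonempty_iff_ne_zero]
  simpa [Cardinal.ord_eq_zero] using h

lemma mk_Iio_lt (hlam : lam.IsRegular) (x : OT lam) : #(Iio x) < lam := by
  have h1 := Ordinal.typein_lt_self (o := lam.ord) x
  rw [Cardinal.lt_ord] at h1
  haveI : IsWellOrder (OT lam) (· < ·) := isWellOrder_lt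
  calc #(Iio x) = (Ordinal.typein (α := OT lam) (· < ·) x).card :=
        Ordinal.card_typein (r := ((· < ·) : OT lam → OT lam → Prop)) x
    _ < lam := h1

lemma mk_Iic_lt_s3 (hlam : lam.IsRegular) (x : OT lam) : #(Iic x) < lam := by
  have h1 : Iic x ⊆ insert x (Iio x) := by
    intro y hy
    rcases eq_or_lt_of_le (mem_Iic.1 hy) with h | h
    · exact mem_insert_iff.2 (Or.inl h)
    · exact mem_insert_iff.2 (Or.inr h)
  refine ((mk_le_mk_of_subset h1).trans mk_insert_le).trans_lt ?_
  exact Cardinal.add_lt_of_lt hlam.1 (mk_Iio_lt hlam x) (one_lt_aleph0.trans_le hlam.1)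

lemma bounded_of_lt (hlam : lam.IsRegular) {s : Set (OT lam)} (hs : #s < lam) :
    ∃ z, ∀ y ∈ s, y < z := by
  by_contra h
  push_neg at h
  have huniv : (univ : Set (OT lam)) = ⋃ y ∈ s, Iic y := by
    ext z
    simp only [mem_univ, true_iff, mem_iUnion]
    obtain ⟨y, hy, hzy⟩ := h z
    exact ⟨y, hy, hzy⟩
  have h1 : lam ≤ #(⋃ y ∈ s, Iic y) := by
    rw [← huniv, mk_univ, mk_OT]
  have h2 : #(⋃ y ∈ s, Iic y) ≤ #s * ⨆ y : s, #(Iic (y : OT lam)) := mk_biUnion_le _ _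
  have h3 : ⨆ y : s, #(Iic (y : OT lam)) < lam :=
    Cardinal.iSup_lt_of_isRegular hlam hs fun y => mk_Iic_lt_s3 hlam y
  exact absurd (h1.trans h2) (Cardinal.mul_lt_of_lt hlam.1 hs h3).not_ge

lemma inter_Ioi_nonempty (hlam : lam.IsRegular) {A : Set (OT lam)} (hA : #A = lam)
    (z : OT lam) : (A ∩ Ioi z).Nonempty := by
  by_contra h
  rw [not_nonempty_iff_eq_empty] at h
  have hsub : A ⊆ Iic z := by
    intro y hy
    by_contra hz
    exact (eq_empty_iff_forall_notMem.1 h) y ⟨hy, (not_le.1 hz : z < y)⟩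
  have := mk_le_mk_of_subset hsub
  rw [hA] at this
  exact absurd this (mk_Iic_lt_s3 hlam z).not_ge

end Aux

noncomputable section Constr

universe u

open Cardinal Set

variable {lam : Cardinal.{u}} [Nonempty (OT lam)] {ι : Type u} (A : ι → Set (OT lam))

/-- Choose an element of `s` if possible. -/
def pick (s : Set (OT lam)) : OT lam :=
  letI := Classical.dec s.Nonempty
  if h : s.Nonempty then h.choose else Classical.arbitrary _

lemma pick_mem {s : Set (OT lam)} (h : s.Nonempty) : pick s ∈ s := by
  rw [pick, dif_pos h]; exact h.choose_spec

/-- Choose a strict upper bound of `s` if possible. -/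
def ub (s : Set (OT lam)) : OT lam :=
  letI := Classical.dec (∃ z, ∀ y ∈ s, y < z)
  if h : ∃ z, ∀ y ∈ s, y < z then h.choose else Classical.arbitrary _

lemma ub_spec {s : Set (OT lam)} (h : ∃ z, ∀ y ∈ s, y < z) : ∀ y ∈ s, y < ub s := by
  rw [ub, dif_pos h]; exact h.choose_spec

/-- The recursive construction of points: at each stage, for each index `i`,
pick a point of `A i` above everything before (`fst`), then another point of
`A i` above all those (`snd`). -/
def stage : OT lam → (ι → OT lam) × (ι → OT lam) :=
  (wellFounded_lt (α := OT lam)).fix fun ε IH =>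
    let b := ub {x | ∃ η, ∃ h : η < ε, x ∈ range (IH η h).1 ∪ range (IH η h).2}
    let p : ι → OT lam := fun i => pick (A i ∩ Ioi b)
    (p, fun i => pick (A i ∩ Ioi (ub (insert b (range p)))))

/-- All points constructed before stage `ε`. -/
def prior (ε : OT lam) : Set (OT lam) :=
  {x | ∃ η, ∃ _ : η < ε, x ∈ range (stage A η).1 ∪ range (stage A η).2}

def bnd (ε : OT lam) : OT lam := ub (prior A ε)

def bnd2 (ε : OT lam) : OT lam :=
  ub (insert (bnd A ε) (range fun i => pick (A i ∩ Ioi (bnd A ε))))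

lemma stage_eq (ε : OT lam) : stage A ε =
    (fun i => pick (A i ∩ Ioi (bnd A ε)), fun i => pick (A i ∩ Ioi (bnd2 A ε))) := by
  rw [stage, WellFounded.fix_eq]
  rfl

def P (ε : OT lam) (i : ι) : OT lam := (stage A ε).1 i
def Q (ε : OT lam) (i : ι) : OT lam := (stage A ε).2 i

lemma P_def (ε : OT lam) (i : ι) : P A ε i = pick (A i ∩ Ioi (bnd A ε)) := by
  rw [P, stage_eq]

lemma Q_def (ε : OT lam) (i : ι) : Q A ε i = pick (A i ∩ Ioi (bnd2 A ε)) := by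
  rw [Q, stage_eq]

variable (hlam : lam.IsRegular) (hι : #ι < lam) (hA : ∀ i, #(A i) = lam)

include hlam hι

lemma prior_small (ε : OT lam) : #(prior A ε) < lam := by
  have hsub : prior A ε ⊆ ⋃ η ∈ Iio ε, (range (stage A η).1 ∪ range (stage A η).2) := by
    rintro x ⟨η, hη, hx⟩
    exact mem_biUnion hη hx
  refine ((mk_le_mk_of_subset hsub).trans (mk_biUnion_le _ _)).trans_lt ?_
  refine Cardinal.mul_lt_of_lt hlam.1 (mk_Iio_lt hlam ε) ?_
  refine Cardinal.iSup_lt_of_isRegular hlam (mk_Iio_lt hlam ε) fun η => ?_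
  refine (mk_union_le _ _).trans_lt ?_
  exact Cardinal.add_lt_of_lt hlam.1 (mk_range_le.trans_lt hι) (mk_range_le.trans_lt hι)

lemma prior_lt_bnd {ε : OT lam} {y : OT lam} (hy : y ∈ prior A ε) : y < bnd A ε :=
  ub_spec (bounded_of_lt hlam (prior_small A hlam hι ε)) y hy

lemma bnd2_bounded (ε : OT lam) :
    ∃ z, ∀ y ∈ insert (bnd A ε) (range fun i => pick (A i ∩ Ioi (bnd A ε))), y < z := by
  refine bounded_of_lt hlam ?_
  refine mk_insert_le.trans_lt ?_
  exact Cardinal.add_lt_of_lt hlam.1 (mk_range_le.trans_lt hι) (one_lt_aleph0.trans_le hlam.1)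

lemma bnd_lt_bnd2 (ε : OT lam) : bnd A ε < bnd2 A ε :=
  ub_spec (bnd2_bounded A hlam hι ε) _ (mem_insert _ _)

lemma P_lt_bnd2 (ε : OT lam) (i : ι) : P A ε i < bnd2 A ε := by
  rw [P_def]
  exact ub_spec (bnd2_bounded A hlam hι ε) _ (mem_insert_of_mem _ (mem_range_self i))

include hA

lemma P_mem (ε : OT lam) (i : ι) : P A ε i ∈ A i ∧ bnd A ε < P A ε i := by
  rw [P_def]
  exact pick_mem (inter_Ioi_nonempty hlam (hA i) (bnd A ε))

lemma Q_mem (ε : OT lam) (i : ι) : Q A ε i ∈ A i ∧ bnd2 A ε < Q A ε i := by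
  rw [Q_def]
  exact pick_mem (inter_Ioi_nonempty hlam (hA i) (bnd2 A ε))

omit hlam hι hA

lemma mem_prior_of_lt {η ε : OT lam} (h : η < ε) (i : ι) :
    P A η i ∈ prior A ε ∧ Q A η i ∈ prior A ε :=
  ⟨⟨η, h, Or.inl (mem_range_self i)⟩, ⟨η, h, Or.inr (mem_range_self i)⟩⟩

include hlam hι hA

lemma P_lt_P {η ε : OT lam} (h : η < ε) (i j : ι) : P A η i < P A ε j :=
  (prior_lt_bnd A hlam hι (mem_prior_of_lt A h i).1).trans (P_mem A hlam hι hA ε j).2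

lemma Q_lt_Q {η ε : OT lam} (h : η < ε) (i j : ι) : Q A η i < Q A ε j :=
  ((prior_lt_bnd A hlam hι (mem_prior_of_lt A h i).2).trans
    (bnd_lt_bnd2 A hlam hι ε)).trans (Q_mem A hlam hι hA ε j).2

lemma P_inj (i : ι) : Function.Injective (fun ε => P A ε i) := by
  intro a b hab
  rcases lt_trichotomy a b with h | h | h
  · exact absurd hab (P_lt_P A hlam hι hA h i i).ne
  · exact h
  · exact absurd hab.symm (P_lt_P A hlam hι hA h i i).ne
  
lemma Q_inj (i : ι) : Function.Injective (fun ε => Q A ε i) := by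
  intro a b hab
  rcases lt_trichotomy a b with h | h | h
  · exact absurd hab (Q_lt_Q A hlam hι hA h i i).ne
  · exact h
  · exact absurd hab.symm (Q_lt_Q A hlam hι hA h i i).ne

lemma Q_ne_P (ε η : OT lam) (i j : ι) : Q A ε i ≠ P A η j := by
  rcases lt_trichotomy ε η with h | h | h
  · exact ((prior_lt_bnd A hlam hι (mem_prior_of_lt A h i).2).trans
      (P_mem A hlam hι hA η j).2).ne
  · subst h
    exact ((P_lt_bnd2 A hlam hι ε j).trans (Q_mem A hlam hι hA ε i).2).ne'
  · exact (((prior_lt_bnd A hlam hι (mem_prior_of_lt A h j).1).trans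
      (bnd_lt_bnd2 A hlam hι ε)).trans (Q_mem A hlam hι hA ε i).2).ne'

end Constr

noncomputable section Main

universe u

open Cardinal Set

variable {lam : Cardinal.{u}}

lemma exists_splitter (hlam : lam.IsRegular) (F : Set (Set (OT lam))) (hF : #F < lam)
    (hmem : ∀ B ∈ F, #B = lam) :
    ∃ S : Set (OT lam), #S = lam ∧ ∀ B ∈ F, Splits lam S B := by
  haveI : Nonempty (OT lam) := OT.nonempty (aleph0_pos.trans_le hlam.1).ne'
  rcases eq_empty_or_nonempty F with rfl | ⟨A₀, hA₀⟩
  · exact ⟨univ, by rw [mk_univ, mk_OT], fun B hB => absurd hB (notMem_empty B)⟩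
  set ι := ↥F with hi
  set A : ι → Set (OT lam) := fun i => (i : Set (OT lam)) with hAdef
  have hι : #ι < lam := hF
  have hA : ∀ i, #(A i) = lam := fun i => hmem i i.2
  set S : Set (OT lam) := {x | ∃ ε i, x = P A ε i} with hSdef
  have hPS : ∀ (ε : OT lam) (i : ι), P A ε i ∈ S ∩ A i :=
    fun ε i => ⟨⟨ε, i, rfl⟩, (P_mem A hlam hι hA ε i).1⟩
  have hQS : ∀ (ε : OT lam) (i : ι), Q A ε i ∈ A i \ S := by
    intro ε i
    refine ⟨(Q_mem A hlam hι hA ε i).1, ?_⟩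
    rintro ⟨η, j, hη⟩
    exact Q_ne_P A hlam hι hA ε η i j hη
  have hinterP : ∀ i : ι, #(S ∩ A i : Set (OT lam)) = lam := by
    intro i
    refine le_antisymm ((mk_le_mk_of_subset inter_subset_right).trans_eq (hA i)) ?_
    calc lam = #(OT lam) := (mk_OT lam).symm
      _ ≤ #(S ∩ A i : Set (OT lam)) := by
          refine mk_le_of_injective (f := fun ε => ⟨P A ε i, hPS ε i⟩) ?_
          intro a b hab
          exact P_inj A hlam hι hA i (congrArg Subtype.val hab)
  have hdiffQ : ∀ i : ι, #(A i \ S : Set (OT lam)) = lam := by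
    intro i
    refine le_antisymm ((mk_le_mk_of_subset diff_subset).trans_eq (hA i)) ?_
    calc lam = #(OT lam) := (mk_OT lam).symm
      _ ≤ #(A i \ S : Set (OT lam)) := by
          refine mk_le_of_injective (f := fun ε => ⟨Q A ε i, hQS ε i⟩) ?_
          intro a b hab
          exact Q_inj A hlam hι hA i (congrArg Subtype.val hab)
  refine ⟨S, ?_, fun B hB => ⟨hinterP ⟨B, hB⟩, hdiffQ ⟨B, hB⟩⟩⟩
  refine le_antisymm ((mk_set_le S).trans_eq (mk_OT lam)) ?_
  calc lam = #(S ∩ A ⟨A₀, hA₀⟩ : Set (OT lam)) := (hinterP ⟨A₀, hA₀⟩).symm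
    _ ≤ #S := mk_le_mk_of_subset inter_subset_left

lemma unreaped_nonempty (lam : Cardinal.{u}) (h0 : lam ≠ 0) :
    {κ | ∃ F : Set (Set (OT lam)), #F = κ ∧ IsUnreaped lam F}.Nonempty := by
  refine ⟨#{B : Set (OT lam) | #B = lam}, {B | #B = lam}, rfl, fun B hB => hB, ?_⟩
  rintro ⟨S, hS, hsp⟩
  have h2 := (hsp S hS).2
  rw [diff_self, mk_emptyCollection] at h2
  exact h0 h2.symm

lemma lam_le_reaping (hlam : lam.IsRegular) : lam ≤ reapingNumber lam := by
  refine le_csInf (unreaped_nonempty lam (aleph0_pos.trans_le hlam.1).ne') ?_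
  rintro κ ⟨F, rfl, hmem, hno⟩
  by_contra h
  push_neg at h
  exact hno (exists_splitter hlam F h hmem)

end Main

section Thm

universe u

open Cardinal Set

private lemma fin2_ne_zero {x : Fin 2} (h : x ≠ 0) : x = 1 := by omega

theorem stmt3_aux (lam μ : Cardinal.{u}) (hlam : lam.IsRegular)
    (h1 : reapingNumber lam < μ) (h2 : μ ≤ 2 ^ lam)
    (hcf : reapingNumber lam < μ.ord.cof) :
    StrongPolarized μ lam := by
  intro c
  obtain ⟨F, hFcard, hFmem, hFno⟩ :=
    csInf_mem (unreaped_nonempty lam (aleph0_pos.trans_le hlam.1).ne')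
  set r := reapingNumber lam with hrdef
  have hlr : lam ≤ r := lam_le_reaping hlam
  have hr0 : ℵ₀ ≤ r := hlam.1.trans hlr
  have hFne : F.Nonempty := by
    rcases eq_empty_or_nonempty F with rfl | h
    · exact absurd ⟨univ, by rw [mk_univ, mk_OT], fun B hB => absurd hB (notMem_empty B)⟩ hFno
    · exact h
  -- for each α, find a set in F on which c α is almost constant, with a bound
  have key : ∀ α : OT μ, ∃ (Ai : ↥F) (i : Fin 2) (ξ : OT lam),
      ∀ β ∈ (Ai : Set (OT lam)), ξ ≤ β → c α β = i := by
    intro α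
    have step : ∃ (Ai : ↥F) (i : Fin 2), #{β ∈ (Ai : Set (OT lam)) | c α β ≠ i} < lam := by
      set B : Set (OT lam) := {β | c α β = 1} with hBdef
      by_cases hB : #B = lam
      · have hex : ∃ A ∈ F, ¬ Splits lam B A := by
          by_contra hall
          push_neg at hall
          exact hFno ⟨B, hB, hall⟩
        obtain ⟨A, hAF, hns⟩ := hex
        rw [Splits, not_and_or] at hns
        have hAl : #A = lam := hFmem A hAF
        rcases hns with h | h
        · refine ⟨⟨A, hAF⟩, 0, ?_⟩
          have he : {β ∈ A | c α β ≠ 0} = B ∩ A := by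
            ext β
            simp only [mem_sep_iff, mem_inter_iff, hBdef, mem_setOf_eq]
            constructor
            · rintro ⟨hβA, hne⟩; exact ⟨fin2_ne_zero hne, hβA⟩
            · rintro ⟨hβB, hβA⟩; exact ⟨hβA, by rw [hβB]; exact one_ne_zero⟩
          rw [he]
          refine lt_of_le_of_ne ?_ h
          exact (mk_le_mk_of_subset inter_subset_right).trans_eq hAl
        · refine ⟨⟨A, hAF⟩, 1, ?_⟩
          have he : {β ∈ A | c α β ≠ 1} = A \ B := by
            ext β
            simp only [mem_sep_iff, mem_diff, hBdef, mem_setOf_eq]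
          rw [he]
          refine lt_of_le_of_ne ?_ h
          exact (mk_le_mk_of_subset diff_subset).trans_eq hAl
      · have hBlt : #B < lam := lt_of_le_of_ne ((mk_set_le B).trans_eq (mk_OT lam)) hB
        obtain ⟨A₀, hA₀⟩ := hFne
        refine ⟨⟨A₀, hA₀⟩, 0, lt_of_le_of_lt (mk_le_mk_of_subset ?_) hBlt⟩
        rintro β ⟨hβA, hne⟩
        exact fin2_ne_zero hne
    obtain ⟨Ai, i, hsmall⟩ := step
    obtain ⟨ξ, hξ⟩ := bounded_of_lt hlam hsmall
    refine ⟨Ai, i, ξ, fun β hβ hle => ?_⟩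
    by_contra hne
    exact absurd hle (not_le.2 (hξ β ⟨hβ, hne⟩))
  choose Af If Xf hkey using key
  let f : OT μ → ↥F × (ULift.{u, 0} (Fin 2) × OT lam) := fun α => (Af α, ⟨If α⟩, Xf α)
  have hμinf : ℵ₀ ≤ μ := hr0.trans h1.le
  have hcof : #(↥F × (ULift.{u, 0} (Fin 2) × OT lam)) < μ.ord.cof := by
    have hFr : #(↥F) = r := hFcard
    have hcalc : #(↥F × (ULift.{u, 0} (Fin 2) × OT lam)) ≤ r * (2 * lam) := by
      rw [mk_prod, mk_prod, Cardinal.mk_uLift, Cardinal.lift_id, Cardinal.lift_id,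
        Cardinal.lift_id, mk_OT, hFr]
      norm_num
    refine lt_of_le_of_lt hcalc (lt_of_le_of_lt ?_ hcf)
    have h2r : (2 : Cardinal) ≤ r := ((nat_lt_aleph0 2).le.trans hr0)
    calc r * (2 * lam) ≤ r * (r * r) := by
          exact mul_le_mul_right (mul_le_mul' h2r hlr) r
      _ = r := by rw [Cardinal.mul_eq_self hr0, Cardinal.mul_eq_self hr0]
  obtain ⟨⟨Ai, ii, ξ⟩, hfib⟩ :=
    Cardinal.infinite_pigeonhole_card f μ (le_of_eq (mk_OT μ).symm) hμinf hcof
  refine ⟨f ⁻¹' {(Ai, ii, ξ)}, (Ai : Set (OT lam)) ∩ Ici ξ, ii.down, ?_, ?_, ?_⟩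
  · exact le_antisymm ((mk_set_le _).trans_eq (mk_OT μ)) hfib
  · have hAl : #(Ai : Set (OT lam)) = lam := hFmem _ Ai.2
    refine le_antisymm ((mk_le_mk_of_subset inter_subset_left).trans_eq hAl) ?_
    by_contra h
    push_neg at h
    have hsplit : (Ai : Set (OT lam)) ⊆
        ((Ai : Set (OT lam)) ∩ Ici ξ) ∪ ((Ai : Set (OT lam)) ∩ Iio ξ) := by
      intro β hβ
      rcases le_or_gt ξ β with hc | hc
      · exact Or.inl ⟨hβ, hc⟩
      · exact Or.inr ⟨hβ, hc⟩
    have hle := mk_le_mk_of_subset hsplit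
    rw [hAl] at hle
    have hsm : #((Ai : Set (OT lam)) ∩ Iio ξ : Set (OT lam)) < lam :=
      (mk_le_mk_of_subset inter_subset_right).trans_lt (mk_Iio_lt hlam ξ)
    exact absurd (hle.trans (mk_union_le _ _))
      (Cardinal.add_lt_of_lt hlam.1 h hsm).not_ge
  · rintro α hα β ⟨hβA, hβξ⟩
    have hfα : f α = (Ai, ii, ξ) := by simpa [f, mem_preimage, mem_singleton_iff] using hα
    have e1 : Af α = Ai := congrArg Prod.fst hfα
    have e2' : If α = ii.down := congrArg (fun p => p.2.1.down) hfα
    have e3 : Xf α = ξ := congrArg (fun p => p.2.2) hfα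
    rw [← e2']
    exact hkey α β (by rw [e1]; exact hβA) (by rw [e3]; exact hβξ)

/-- upward positive relation above the reaping number. -/
theorem stmt3 (lam μ : Cardinal) (hlam : lam.IsRegular)
    (h1 : reapingNumber lam < μ) (h2 : μ ≤ 2 ^ lam)
    (hcf : reapingNumber lam < μ.ord.cof) :
    StrongPolarized μ lam :=
  stmt3_aux lam μ hlam h1 h2 hcf

end Thm
end
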